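/- arXiv:0902.1937 — 3 statements merged into one kernel-verified Lean document; each statement's English description precedes it below -/
import Mathlib

section
/- Let β be a Hermitian complex L×L matrix with 0 ≤ β and β < 1 (i.e. β is positive semidefinite and 1 − β is positive definite). Then for every unitary L×L matrix U the matrix U + β is invertible, and ∫_{U(L)} (U + β)^{-1} U dU = 1 with respect to the normalized Haar measure on the unitary group U(L). -/
open MeasureTheory Matrix
open scoped ComplexOrder

noncomputable section

/-- The space of complex `L × L` matrices. -/
abbrev Mat (L : ℕ) := Matrix (Fin L) (Fin L) ℂ

instance (L : ℕ) : MeasurableSpace (Matrix.unitaryGroup (Fin L) ℂ) := borel _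

instance (L : ℕ) : BorelSpace (Matrix.unitaryGroup (Fin L) ℂ) := ⟨rfl⟩

/-- continuity of the integrand entries, proven with the usual (pi) topology on matrices. -/
lemma stmt14_cont {L : ℕ} (β : Mat L) (n : ℕ) (i j : Fin L) :
    Continuous (fun U : Matrix.unitaryGroup (Fin L) ℂ =>
      (((-(star (U : Mat L) * β)) ^ n) : Mat L) i j) := by
  have h0 : Continuous (fun U : Matrix.unitaryGroup (Fin L) ℂ => (U : Mat L)) :=
    continuous_subtype_val
  have h1 : Continuous (fun U : Matrix.unitaryGroup (Fin L) ℂ =>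
      ((-(star (U : Mat L) * β)) ^ n : Mat L)) := by
    fun_prop
  exact (continuous_apply j).comp ((continuous_apply i).comp h1)

section L2
open scoped Matrix.Norms.L2Operator

lemma stmt14_entry_le_norm {L : ℕ} (M : Mat L) (i j : Fin L) : ‖M i j‖ ≤ ‖M‖ := by
  classical
  have h := Matrix.l2_opNorm_mulVec M (EuclideanSpace.single j (1:ℂ))
  rw [EuclideanSpace.norm_single, norm_one, mul_one] at h
  refine le_trans ?_ h
  have heq : ((EuclideanSpace.equiv (Fin L) ℂ).symm (M *ᵥ (EuclideanSpace.single j (1:ℂ)))) i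
      = M i j := by
    show (M *ᵥ Pi.single j (1:ℂ)) i = M i j
    simp [Matrix.mulVec_single]
  rw [← heq]
  set y := (EuclideanSpace.equiv (Fin L) ℂ).symm (M *ᵥ (EuclideanSpace.single j (1:ℂ)))
  rw [EuclideanSpace.norm_eq]
  rw [show ‖y i‖ = Real.sqrt (‖y i‖^2) from (Real.sqrt_sq (norm_nonneg _)).symm]
  apply Real.sqrt_le_sqrt
  exact Finset.single_le_sum (f := fun k => ‖y k‖^2) (fun k _ => by positivity) (Finset.mem_univ i)

lemma stmt14_diag_norm_le {L : ℕ} (d : Fin L → ℂ) (c : ℝ) (hc : 0 ≤ c) (h : ∀ i, ‖d i‖ ≤ c) :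
    ‖(Matrix.diagonal d : Mat L)‖ ≤ c := by
  rw [Matrix.l2_opNorm_def]
  apply ContinuousLinearMap.opNorm_le_bound _ hc
  intro x
  rw [LinearEquiv.trans_apply]
  have hx : ‖x‖ = Real.sqrt (∑ i, ‖x i‖^2) := EuclideanSpace.norm_eq x
  have happ : ((LinearMap.toContinuousLinearMap) (Matrix.toEuclideanLin (Matrix.diagonal d)) x)
      = Matrix.toEuclideanLin (Matrix.diagonal d) x := rfl
  rw [happ]
  have hnorm : ‖Matrix.toEuclideanLin (Matrix.diagonal d) x‖
      = Real.sqrt (∑ i, ‖d i * x i‖^2) := by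
    rw [EuclideanSpace.norm_eq]
    congr 1
    refine Finset.sum_congr rfl fun i _ => ?_
    congr 2
    show (Matrix.diagonal d *ᵥ (WithLp.equiv 2 _ x)) i = d i * x i
    rw [Matrix.mulVec_diagonal]
    rfl
  rw [hnorm, hx, ← Real.sqrt_sq hc, ← Real.sqrt_mul (by positivity)]
  apply Real.sqrt_le_sqrt
  rw [Finset.mul_sum]
  refine Finset.sum_le_sum fun i _ => ?_
  rw [norm_mul, mul_pow]
  have h1 := h i
  have h2 : ‖d i‖^2 ≤ c^2 := by nlinarith [norm_nonneg (d i)]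
  nlinarith [norm_nonneg (x i), sq_nonneg (‖x i‖)]

lemma stmt14_eigenvalue_lt_one {L : ℕ} (β : Mat L) (hβherm : β.IsHermitian)
    (hβ1 : ((1 : Mat L) - β).PosDef) (i : Fin L) : hβherm.eigenvalues i < 1 := by
  set v : Fin L → ℂ := ⇑(hβherm.eigenvectorBasis i) with hv
  have hvne : v ≠ 0 := by
    rw [hv, ne_eq, WithLp.ofLp_eq_zero]; exact hβherm.eigenvectorBasis.orthonormal.ne_zero i
  have hpos := hβ1.re_dotProduct_pos hvne
  have hmul : ((1 : Mat L) - β) *ᵥ v = (1 - (hβherm.eigenvalues i : ℂ)) • v := by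
    rw [Matrix.sub_mulVec, Matrix.one_mulVec, hβherm.mulVec_eigenvectorBasis]
    simp [sub_smul, Complex.real_smul, hv]
  rw [hmul] at hpos
  have hnorm : dotProduct (star v) v = 1 := by
    have hn := hβherm.eigenvectorBasis.orthonormal.1 i
    have h2 : (inner ℂ (hβherm.eigenvectorBasis i) (hβherm.eigenvectorBasis i) : ℂ)
        = dotProduct (star v) v := by
      rw [EuclideanSpace.inner_eq_star_dotProduct, dotProduct_comm]
    rw [← h2, inner_self_eq_norm_sq_to_K, hn]
    norm_num
  rw [dotProduct_smul, hnorm] at hpos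
  simp only [smul_eq_mul, mul_one] at hpos
  have : (0:ℝ) < 1 - hβherm.eigenvalues i := by
    simpa [Complex.sub_re, Complex.ofReal_re] using hpos
  linarith

lemma stmt14_norm_lt_one {L : ℕ} (hL : 1 ≤ L) (β : Mat L) (hβherm : β.IsHermitian)
    (hβ0 : β.PosSemidef) (hβ1 : ((1 : Mat L) - β).PosDef) : ‖β‖ < 1 := by
  haveI : Nonempty (Fin L) := Fin.pos_iff_nonempty.mp hL
  set c : ℝ := Finset.univ.sup' Finset.univ_nonempty hβherm.eigenvalues with hc
  have hc0 : 0 ≤ c := by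
    obtain ⟨i⟩ := (inferInstance : Nonempty (Fin L))
    exact le_trans (hβ0.eigenvalues_nonneg i) (Finset.le_sup' _ (Finset.mem_univ i))
  have hc1 : c < 1 := by
    rw [hc, Finset.sup'_lt_iff]
    exact fun i _ => stmt14_eigenvalue_lt_one β hβherm hβ1 i
  have hbound : ‖β‖ ≤ c := by
    conv_lhs => rw [hβherm.spectral_theorem]
    rw [Unitary.conjStarAlgAut_apply, mul_assoc]
    rw [CStarRing.norm_coe_unitary_mul (hβherm.eigenvectorUnitary)]
    rw [show (star ((hβherm.eigenvectorUnitary : Mat L)) : Mat L)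
        = ((star hβherm.eigenvectorUnitary : Matrix.unitaryGroup (Fin L) ℂ) : Mat L) from rfl]
    rw [CStarRing.norm_mul_coe_unitary]
    apply stmt14_diag_norm_le _ c hc0
    intro i
    simp only [Function.comp_apply]
    rw [show ((RCLike.ofReal (hβherm.eigenvalues i) : ℂ)) = ((hβherm.eigenvalues i : ℝ) : ℂ) from rfl]
    rw [Complex.norm_real, Real.norm_eq_abs, abs_of_nonneg (hβ0.eigenvalues_nonneg i)]
    exact Finset.le_sup' _ (Finset.mem_univ i)
  linarith


lemma stmt14_x_norm_eq {L : ℕ} (β : Mat L) (U : Matrix.unitaryGroup (Fin L) ℂ) :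
    ‖-(star (U : Mat L) * β)‖ = ‖β‖ := by
  rw [norm_neg]
  rw [show star (U : Mat L) = ((star U : Matrix.unitaryGroup (Fin L) ℂ) : Mat L) from rfl]
  exact CStarRing.norm_coe_unitary_mul (star U) β

lemma stmt14_x_norm_lt_one {L : ℕ} (hL : 1 ≤ L) (β : Mat L) (hβherm : β.IsHermitian)
    (hβ0 : β.PosSemidef) (hβ1 : ((1 : Mat L) - β).PosDef)
    (U : Matrix.unitaryGroup (Fin L) ℂ) : ‖-(star (U : Mat L) * β)‖ < 1 := by
  rw [stmt14_x_norm_eq]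
  exact stmt14_norm_lt_one hL β hβherm hβ0 hβ1

lemma stmt14_factor {L : ℕ} (β : Mat L) (U : Matrix.unitaryGroup (Fin L) ℂ) :
    (U : Mat L) + β = (U : Mat L) * (1 - (-(star (U : Mat L) * β))) := by
  rw [sub_neg_eq_add, mul_add, mul_one, ← mul_assoc,
    Matrix.mem_unitaryGroup_iff.mp U.2, one_mul]

theorem stmt14 (L : ℕ) (hL : 1 ≤ L)
    (β : Mat L) (hβherm : β.IsHermitian)
    (hβ0 : β.PosSemidef) (hβ1 : ((1 : Mat L) - β).PosDef)
    (μ : Measure (Matrix.unitaryGroup (Fin L) ℂ))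
    [μ.IsHaarMeasure] [IsProbabilityMeasure μ] :
    (∀ U : Matrix.unitaryGroup (Fin L) ℂ, IsUnit ((U : Mat L) + β)) ∧
    (∀ i j : Fin L,
      (∫ (U : Matrix.unitaryGroup (Fin L) ℂ),
          (((U : Mat L) + β)⁻¹ * (U : Mat L)) i j ∂μ) = (1 : Mat L) i j) := by
  classical
  have hβlt : ‖β‖ < 1 := stmt14_norm_lt_one hL β hβherm hβ0 hβ1
  have hβnn : 0 ≤ ‖β‖ := norm_nonneg β
  -- unit facts
  have hUunit : ∀ U : Matrix.unitaryGroup (Fin L) ℂ, IsUnit (U : Mat L) :=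
    fun U => ⟨Unitary.toUnits U, rfl⟩
  have hxlt : ∀ U : Matrix.unitaryGroup (Fin L) ℂ, ‖-(star (U : Mat L) * β)‖ < 1 :=
    stmt14_x_norm_lt_one hL β hβherm hβ0 hβ1
  have hsum_unit : ∀ U : Matrix.unitaryGroup (Fin L) ℂ, IsUnit ((U : Mat L) + β) := by
    intro U
    rw [stmt14_factor β U]
    exact (hUunit U).mul (isUnit_one_sub_of_norm_lt_one (hxlt U))
  refine ⟨hsum_unit, ?_⟩
  intro i j
  -- inverse formula
  have hinv : ∀ U : Matrix.unitaryGroup (Fin L) ℂ,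
      ((U : Mat L) + β)⁻¹ * (U : Mat L) = Ring.inverse (1 - (-(star (U : Mat L) * β))) := by
    intro U
    rw [stmt14_factor β U, Matrix.mul_inv_rev, mul_assoc,
      Matrix.nonsing_inv_mul _ ((Matrix.isUnit_iff_isUnit_det _).mp (hUunit U)), mul_one,
      Matrix.nonsing_inv_eq_ringInverse]
  -- the entry evaluation as a continuous linear map
  let e : Mat L →L[ℂ] ℂ :=
    LinearMap.toContinuousLinearMap (Matrix.entryLinearMap ℂ ℂ i j)
  have he : ∀ M : Mat L, e M = M i j := fun _ => rfl
  set F : ℕ → Matrix.unitaryGroup (Fin L) ℂ → ℂ :=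
    fun n U => (((-(star (U : Mat L) * β)) ^ n) : Mat L) i j with hF
  -- pointwise: inverse entry as tsum
  have hpt : ∀ U : Matrix.unitaryGroup (Fin L) ℂ,
      (((U : Mat L) + β)⁻¹ * (U : Mat L)) i j = ∑' n, F n U := by
    intro U
    have hS := hasSum_geom_series_inverse (-(star (U : Mat L) * β)) (hxlt U)
    have hSe : HasSum (fun n => F n U)
        ((Ring.inverse (1 - (-(star (U : Mat L) * β))) : Mat L) i j) := by
      simpa only [he] using hS.mapL e
    rw [hinv U]
    exact hSe.tsum_eq.symm
  -- entry bound
  have hEntry : ∀ n (U : Matrix.unitaryGroup (Fin L) ℂ), ‖F n U‖ ≤ ‖β‖ ^ n := by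
    intro n U
    refine le_trans (stmt14_entry_le_norm _ i j) ?_
    rcases Nat.eq_zero_or_pos n with h0 | hpos
    · subst h0
      haveI : Nonempty (Fin L) := Fin.pos_iff_nonempty.mp hL
      haveI : Nontrivial (Mat L) := by
        obtain ⟨k⟩ := (inferInstance : Nonempty (Fin L))
        exact ⟨1, 0, fun h => by simpa using congrFun (congrFun h k) k⟩
      rw [show (npowRec 0 (-(star (U : Mat L) * β)) : Mat L) = 1 from rfl,
        pow_zero, CStarRing.norm_one]
    · refine le_trans (norm_pow_le' _ hpos) ?_
      refine pow_le_pow_left₀ (norm_nonneg _) ?_ n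
      exact le_of_eq (stmt14_x_norm_eq β U)
  -- measurability and integrability
  have hmeas : ∀ n, AEStronglyMeasurable (F n) μ :=
    fun n => (stmt14_cont β n i j).aestronglyMeasurable
  have hInt : ∀ n, Integrable (F n) μ := fun n =>
    Integrable.mono' (integrable_const (‖β‖ ^ n)) (hmeas n) (ae_of_all _ (hEntry n))
  have hSum : Summable (fun n => ∫ U, ‖F n U‖ ∂μ) := by
    refine Summable.of_nonneg_of_le (fun n => integral_nonneg fun U => norm_nonneg _)
      (fun n => ?_) (summable_geometric_of_lt_one hβnn hβlt)
    calc ∫ U, ‖F n U‖ ∂μ ≤ ∫ _, ‖β‖ ^ n ∂μ :=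
          integral_mono (hInt n).norm (integrable_const _) (hEntry n)
      _ = ‖β‖ ^ n := by simp
  have hswap : ∑' n, (∫ U, F n U ∂μ) = ∫ U, (∑' n, F n U) ∂μ :=
    integral_tsum_of_summable_integral_norm hInt hSum
  -- vanishing of higher order terms by Haar invariance
  have hvanish : ∀ n, n ≠ 0 → (∫ U, F n U ∂μ) = 0 := by
    intro n hn
    have hn' : (n : ℂ) ≠ 0 := Nat.cast_ne_zero.mpr hn
    set ω : ℂ := Complex.exp (Real.pi * Complex.I / n) with hω
    have hωconj : (starRingEnd ℂ) ω * ω = 1 := by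
      rw [hω, ← Complex.exp_conj, ← Complex.exp_add]
      rw [show (starRingEnd ℂ) (Real.pi * Complex.I / n) = -(Real.pi * Complex.I / n) by
        rw [map_div₀, _root_.map_mul, Complex.conj_I, Complex.conj_ofReal, map_natCast]; ring]
      rw [neg_add_cancel, Complex.exp_zero]
    have hmem : (ω • (1 : Mat L)) ∈ Matrix.unitaryGroup (Fin L) ℂ := by
      rw [Matrix.mem_unitaryGroup_iff']
      rw [star_smul, star_one, smul_mul_smul_comm, mul_one]
      rw [show (star ω : ℂ) = (starRingEnd ℂ) ω from rfl, hωconj, one_smul]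
    set g : Matrix.unitaryGroup (Fin L) ℂ := ⟨ω • (1 : Mat L), hmem⟩ with hg
    have hInvar := integral_mul_left_eq_self (μ := μ) (F n) g
    have hconjpow : ((starRingEnd ℂ) ω) ^ n = -1 := by
      rw [← map_pow]
      rw [show ω ^ n = -1 by
        rw [hω, ← Complex.exp_nat_mul,
          show (n : ℂ) * (Real.pi * Complex.I / n) = Real.pi * Complex.I by field_simp]
        exact Complex.exp_pi_mul_I]
      simp
    have hgU : ∀ U, F n (g * U) = -(F n U) := by
      intro U
      have hx : -(star ((g * U : Matrix.unitaryGroup (Fin L) ℂ) : Mat L) * β)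
          = (starRingEnd ℂ) ω • (-(star (U : Mat L) * β)) := by
        have hcoe : ((g * U : Matrix.unitaryGroup (Fin L) ℂ) : Mat L)
            = (ω • (1 : Mat L)) * (U : Mat L) := rfl
        rw [hcoe, StarMul.star_mul, star_smul, star_one]
        rw [show (star ω : ℂ) = (starRingEnd ℂ) ω from rfl]
        rw [mul_smul_comm, mul_one, smul_mul_assoc, smul_neg]
      show ((-(star ((g * U : Matrix.unitaryGroup (Fin L) ℂ) : Mat L) * β)) ^ n) i j = _
      rw [hx, smul_pow, hconjpow, Matrix.smul_apply, smul_eq_mul, neg_one_mul]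
    have hEq : ∫ U, F n U ∂μ = -∫ U, F n U ∂μ := by
      conv_lhs => rw [← hInvar]
      simp_rw [hgU]
      exact integral_neg _
    have h2 : (2 : ℂ) * ∫ U, F n U ∂μ = 0 := by linear_combination hEq
    have := mul_eq_zero.mp h2
    simpa using this
  -- conclude
  have hfun : (fun U : Matrix.unitaryGroup (Fin L) ℂ => (((U : Mat L) + β)⁻¹ * (U : Mat L)) i j)
      = fun U => ∑' n, F n U := funext hpt
  calc (∫ U, (((U : Mat L) + β)⁻¹ * (U : Mat L)) i j ∂μ)
      = ∫ U, (∑' n, F n U) ∂μ := by rw [hfun]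
    _ = ∑' n, ∫ U, F n U ∂μ := hswap.symm
    _ = ∫ U, F 0 U ∂μ := tsum_eq_single 0 hvanish
    _ = (1 : Mat L) i j := by
        have hF0 : F 0 = fun _ => (1 : Mat L) i j := by
          funext U
          show ((-(star (U : Mat L) * β)) ^ 0) i j = (1 : Mat L) i j
          rw [pow_zero]
        rw [hF0]
        simp

end L2
end
end

section
/- Let E ∈ ℝ, let V be a self-adjoint complex L×L matrix, let T and T' be invertible complex L×L matrices, and let W and W' be positive definite complex L×L matrices. Set 𝒯 = [[(E − V)T^{-1}, −T^*],[T^{-1}, 0]] (a 2L×2L matrix in L×L blocks). Then the 2L×2L matrix diag( (T^{-1})^* W T^{-1}, 0 ) + 𝒯^* · diag( (T'^{-1})^* W' T'^{-1}, 0 ) · 𝒯 is positive definite, where diag(M, 0) denotes the 2L×2L block diagonal matrix with blocks M and 0. -/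
open MeasureTheory Matrix
open scoped ComplexOrder

noncomputable section

/-- The `2L × 2L` transfer matrix `[[(E − V)T⁻¹, −T^*], [T⁻¹, 0]]`. -/
def transferM (L : ℕ) (z : ℂ) (T V : Mat L) : Matrix (Fin L ⊕ Fin L) (Fin L ⊕ Fin L) ℂ :=
  Matrix.fromBlocks ((z • (1 : Mat L) - V) * T⁻¹) (-(Tᴴ)) T⁻¹ 0

private lemma quad_fb {L : ℕ} (N : Mat L) (x : Fin L ⊕ Fin L → ℂ) :
    star x ⬝ᵥ (Matrix.fromBlocks N 0 0 0 *ᵥ x)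
      = star (x ∘ Sum.inl) ⬝ᵥ (N *ᵥ (x ∘ Sum.inl)) := by
  have hx : x = Sum.elim (x ∘ Sum.inl) (x ∘ Sum.inr) := (Sum.elim_comp_inl_inr x).symm
  rw [hx, Matrix.fromBlocks_mulVec, Function.star_sumElim,
    sumElim_dotProduct_sumElim]
  simp

private lemma quad_sandwich {n : Type*} [Fintype n] (A B : Matrix n n ℂ) (v : n → ℂ) :
    star v ⬝ᵥ ((Bᴴ * A * B) *ᵥ v) = star (B *ᵥ v) ⬝ᵥ (A *ᵥ (B *ᵥ v)) := by
  simp only [star_mulVec, Matrix.dotProduct_mulVec, Matrix.vecMul_vecMul]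

private lemma mulVec_ne {n : Type*} [Fintype n] [DecidableEq n] {S : Matrix n n ℂ}
    (hS : IsUnit S) {v : n → ℂ} (hv : v ≠ 0) : S *ᵥ v ≠ 0 := by
  intro h
  exact hv (Matrix.mulVec_injective_iff_isUnit.2 hS (by simpa using h))

theorem stmt18 (L : ℕ) (hL : 1 ≤ L) (E : ℝ)
    (V T T' W W' : Mat L) (hV : V.IsHermitian)
    (hT : IsUnit T) (hT' : IsUnit T')
    (hW : W.PosDef) (hW' : W'.PosDef) :
    (Matrix.fromBlocks ((T⁻¹)ᴴ * W * T⁻¹) 0 0 0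
      + (transferM L (E : ℂ) T V)ᴴ
        * Matrix.fromBlocks ((T'⁻¹)ᴴ * W' * T'⁻¹) 0 0 0
        * transferM L (E : ℂ) T V).PosDef := by
  have hTi : IsUnit (T⁻¹ : Mat L) := Matrix.isUnit_nonsing_inv_iff.2 hT
  have hTi' : IsUnit (T'⁻¹ : Mat L) := Matrix.isUnit_nonsing_inv_iff.2 hT'
  have hTH : IsUnit (Tᴴ : Mat L) := by
    rw [← Matrix.star_eq_conjTranspose]; exact hT.star
  set 𝒯 := transferM L (E : ℂ) T V with h𝒯
  have hFB : (Matrix.fromBlocks ((T⁻¹)ᴴ * W * T⁻¹) (0 : Mat L) (0 : Mat L)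
      (0 : Mat L)).IsHermitian := by
    unfold Matrix.IsHermitian
    rw [Matrix.fromBlocks_conjTranspose]
    simp [(Matrix.isHermitian_conjTranspose_mul_mul (T⁻¹) hW.1).eq]
  have hFB' : (Matrix.fromBlocks ((T'⁻¹)ᴴ * W' * T'⁻¹) (0 : Mat L) (0 : Mat L)
      (0 : Mat L)).IsHermitian := by
    unfold Matrix.IsHermitian
    rw [Matrix.fromBlocks_conjTranspose]
    simp [(Matrix.isHermitian_conjTranspose_mul_mul (T'⁻¹) hW'.1).eq]
  rw [Matrix.posDef_iff_dotProduct_mulVec]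
  constructor
  · exact hFB.add (Matrix.isHermitian_conjTranspose_mul_mul 𝒯 hFB')
  intro x hx
  set x₁ := x ∘ Sum.inl with hx₁
  set x₂ := x ∘ Sum.inr with hx₂
  set y := 𝒯 *ᵥ x with hy
  have key : star x ⬝ᵥ ((Matrix.fromBlocks ((T⁻¹)ᴴ * W * T⁻¹) 0 0 0
      + 𝒯ᴴ * Matrix.fromBlocks ((T'⁻¹)ᴴ * W' * T'⁻¹) 0 0 0 * 𝒯) *ᵥ x)
      = star (T⁻¹ *ᵥ x₁) ⬝ᵥ (W *ᵥ (T⁻¹ *ᵥ x₁))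
        + star (T'⁻¹ *ᵥ (y ∘ Sum.inl)) ⬝ᵥ (W' *ᵥ (T'⁻¹ *ᵥ (y ∘ Sum.inl))) := by
    rw [Matrix.add_mulVec, dotProduct_add, quad_fb,
      quad_sandwich W (T⁻¹) x₁,
      quad_sandwich (Matrix.fromBlocks ((T'⁻¹)ᴴ * W' * T'⁻¹) 0 0 0) 𝒯 x,
      ← hy, quad_fb, quad_sandwich W' (T'⁻¹) (y ∘ Sum.inl)]
  rw [key]
  -- the first block of y
  have hy1 : y ∘ Sum.inl
      = ((E : ℂ) • (1 : Mat L) - V) *ᵥ (T⁻¹ *ᵥ x₁) + -(Tᴴ *ᵥ x₂) := by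
    have hxe : x = Sum.elim x₁ x₂ := (Sum.elim_comp_inl_inr x).symm
    funext i
    simp [hy, h𝒯, transferM, hxe, Matrix.fromBlocks_mulVec, Matrix.neg_mulVec,
      Matrix.mulVec_mulVec, Matrix.mul_assoc]
  by_cases hx1 : x₁ = 0
  · -- then x₂ ≠ 0 and second term is positive
    have hx2 : x₂ ≠ 0 := by
      intro hx2
      apply hx
      funext i
      cases i with
      | inl i => exact congrFun hx1 i
      | inr i => exact congrFun hx2 i
    have hy1' : y ∘ Sum.inl = -(Tᴴ *ᵥ x₂) := by
      rw [hy1, hx1]; simp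
    have hne : T'⁻¹ *ᵥ (y ∘ Sum.inl) ≠ 0 := by
      apply mulVec_ne hTi'
      rw [hy1']
      simpa using mulVec_ne hTH hx2
    have h2 := hW'.dotProduct_mulVec_pos hne
    have h1 : 0 ≤ star (T⁻¹ *ᵥ x₁) ⬝ᵥ (W *ᵥ (T⁻¹ *ᵥ x₁)) := hW.posSemidef.dotProduct_mulVec_nonneg _
    exact add_pos_of_nonneg_of_pos h1 h2
  · have hne : T⁻¹ *ᵥ x₁ ≠ 0 := mulVec_ne hTi hx1
    have h1 := hW.dotProduct_mulVec_pos hne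
    have h2 : 0 ≤ star (T'⁻¹ *ᵥ (y ∘ Sum.inl)) ⬝ᵥ (W' *ᵥ (T'⁻¹ *ᵥ (y ∘ Sum.inl))) :=
      hW'.posSemidef.dotProduct_mulVec_nonneg _
    exact add_pos_of_pos_of_nonneg h1 h2
end
end

section
/- Let Ẑ and Z be arbitrary complex L×L matrices and z ∈ ℂ. Then the geometric multiplicity of z as an eigenvalue of H^N_{Ẑ,Z} equals the dimension of the intersection of the column span of the 2L×L matrix 𝒯^z(N,0)·(1; −Ẑ) with the column span of the 2L×L matrix (−Z; 1); that is, dim_ℂ ker(H^N_{Ẑ,Z} − z·1) = dim_ℂ ( range(𝒯^z(N,0)(1; −Ẑ)) ∩ range((−Z; 1)) ) as subspaces of ℂ^{2L}. -/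
open MeasureTheory Matrix
open scoped ComplexOrder

noncomputable section

/-- The transfer matrix across the sample, `𝒯^z(N,0) = 𝒯_N^z ⋯ 𝒯_1^z`. -/
def transferProd (L N : ℕ) (T V : ℕ → Mat L) (z : ℂ) :
    Matrix (Fin L ⊕ Fin L) (Fin L ⊕ Fin L) ℂ :=
  (((List.range N).map (fun n => transferM L z (T (n + 1)) (V (n + 1)))).reverse).prod

/-- The block tridiagonal Jacobi matrix `H^N_{Ẑ,Z}` (sites `1,…,N` are indexed by `Fin N`). -/
def jacobi (L N : ℕ) (T V : ℕ → Mat L) (Zh Z : Mat L) :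
    Matrix (Fin N × Fin L) (Fin N × Fin L) ℂ :=
  Matrix.of fun p q =>
    if p.1 = q.1 then
      (V (p.1.val + 1) - (if p.1.val = 0 then Zh else 0)
        - (if p.1.val = N - 1 then Z else 0)) p.2 q.2
    else if q.1.val = p.1.val + 1 then T (p.1.val + 2) p.2 q.2
    else if p.1.val = q.1.val + 1 then (T (q.1.val + 2))ᴴ p.2 q.2
    else 0


namespace Stmt19Aux

variable {L : ℕ} (T V : ℕ → Mat L) (Zh Z : Mat L) (z : ℂ)

lemma transferProd_zero : transferProd L 0 T V z = 1 := by
  simp [transferProd]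

lemma transferProd_succ (n : ℕ) :
    transferProd L (n + 1) T V z =
      transferM L z (T (n + 1)) (V (n + 1)) * transferProd L n T V z := by
  simp [transferProd, List.range_succ]

lemma mulVec_cancel {n : Type*} [Fintype n] [DecidableEq n] {M : Matrix n n ℂ} (h : IsUnit M)
    {a b : n → ℂ} (hab : M *ᵥ a = M *ᵥ b) : a = b := by
  have hd : IsUnit M.det := (Matrix.isUnit_iff_isUnit_det M).mp h
  have := congrArg (fun v => M⁻¹ *ᵥ v) hab
  simpa [Matrix.mulVec_mulVec, Matrix.nonsing_inv_mul M hd, Matrix.one_mulVec] using this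

lemma transferM_isUnit {T0 : Mat L} (h : IsUnit T0) (V0 : Mat L) :
    IsUnit (transferM L z T0 V0) := by
  have hd : IsUnit T0.det := (Matrix.isUnit_iff_isUnit_det T0).mp h
  have hdH : IsUnit T0ᴴ.det := by
    rw [Matrix.det_conjTranspose]; exact hd.star
  have h2 : T0⁻¹ * T0 = 1 := Matrix.nonsing_inv_mul T0 hd
  have h3 : T0ᴴ * (T0ᴴ)⁻¹ = 1 := Matrix.mul_nonsing_inv _ hdH
  set B0 := (z • (1 : Mat L) - V0) * T0⁻¹ with hB0
  have key : transferM L z T0 V0 *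
      Matrix.fromBlocks 0 T0 (-(T0ᴴ)⁻¹) ((T0ᴴ)⁻¹ * B0 * T0) = 1 := by
    rw [transferM, Matrix.fromBlocks_multiply]
    have e11 : B0 * 0 + -(T0ᴴ) * -(T0ᴴ)⁻¹ = 1 := by
      rw [mul_zero, neg_mul_neg, h3, zero_add]
    have e12 : B0 * T0 + -(T0ᴴ) * ((T0ᴴ)⁻¹ * B0 * T0) = 0 := by
      rw [neg_mul, ← mul_assoc, ← mul_assoc, h3, one_mul, add_neg_cancel]
    have e21 : T0⁻¹ * 0 + (0 : Mat L) * -(T0ᴴ)⁻¹ = 0 := by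
      rw [mul_zero, zero_mul, add_zero]
    have e22 : T0⁻¹ * T0 + (0 : Mat L) * ((T0ᴴ)⁻¹ * B0 * T0) = 1 := by
      rw [h2, zero_mul, add_zero]
    rw [e11, e12, e21, e22, Matrix.fromBlocks_one]
  exact ⟨⟨_, _, key, by rwa [mul_eq_one_comm] at key⟩, rfl⟩

lemma transferProd_isUnit (n : ℕ) (h : ∀ k, 1 ≤ k → k ≤ n → IsUnit (T k)) :
    IsUnit (transferProd L n T V z) := by
  induction n with
  | zero => simp [transferProd_zero]
  | succ m ih =>
      rw [transferProd_succ]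
      exact (transferM_isUnit z (h (m + 1) (by omega) (by omega)) (V (m + 1))).mul
        (ih fun k hk1 hk2 => h k hk1 (by omega))

def Bmat (n : ℕ) : Matrix (Fin L ⊕ Fin L) (Fin L) ℂ :=
  transferProd L n T V z * Matrix.fromRows 1 (-Zh)

def psi (x : Fin L → ℂ) (n : ℕ) : Fin L → ℂ := (Bmat T V Zh z n *ᵥ x) ∘ Sum.inr

def psiTop (x : Fin L → ℂ) (n : ℕ) : Fin L → ℂ := (Bmat T V Zh z n *ᵥ x) ∘ Sum.inl

lemma Bmat_mulVec (x : Fin L → ℂ) (n : ℕ) :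
    Bmat T V Zh z n *ᵥ x = transferProd L n T V z *ᵥ (Matrix.fromRows 1 (-Zh) *ᵥ x) := by
  rw [Matrix.mulVec_mulVec]; rfl

lemma Bmat_succ_mulVec (x : Fin L → ℂ) (n : ℕ) :
    Bmat T V Zh z (n + 1) *ᵥ x =
      transferM L z (T (n + 1)) (V (n + 1)) *ᵥ (Bmat T V Zh z n *ᵥ x) := by
  rw [Bmat_mulVec, Bmat_mulVec, transferProd_succ, ← Matrix.mulVec_mulVec]

lemma psi_zero (x : Fin L → ℂ) : psi T V Zh z x 0 = (-Zh) *ᵥ x := by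
  funext l
  simp [psi, Bmat_mulVec, transferProd_zero, Matrix.fromRows_mulVec]

lemma psiTop_zero (x : Fin L → ℂ) : psiTop T V Zh z x 0 = x := by
  funext l
  simp [psiTop, Bmat_mulVec, transferProd_zero, Matrix.fromRows_mulVec]

lemma psi_succ (x : Fin L → ℂ) (n : ℕ) :
    psi T V Zh z x (n + 1) = (T (n + 1))⁻¹ *ᵥ psiTop T V Zh z x n := by
  unfold psi psiTop
  rw [Bmat_succ_mulVec, transferM, Matrix.fromBlocks_mulVec]
  simp

lemma psiTop_succ (x : Fin L → ℂ) (n : ℕ) :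
    psiTop T V Zh z x (n + 1) =
      (z • (1 : Mat L) - V (n + 1)) *ᵥ psi T V Zh z x (n + 1)
        - (T (n + 1))ᴴ *ᵥ psi T V Zh z x n := by
  have h : psiTop T V Zh z x (n + 1) =
      ((z • (1 : Mat L) - V (n + 1)) * (T (n + 1))⁻¹) *ᵥ psiTop T V Zh z x n
        + (-(T (n + 1))ᴴ) *ᵥ psi T V Zh z x n := by
    unfold psi psiTop
    rw [Bmat_succ_mulVec, transferM, Matrix.fromBlocks_mulVec]
    simp
  rw [h, ← Matrix.mulVec_mulVec, ← psi_succ, Matrix.neg_mulVec]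
  exact (sub_eq_add_neg _ _).symm

lemma psiTop_eq_mul (x : Fin L → ℂ) (n : ℕ) (hu : IsUnit (T (n + 1))) :
    psiTop T V Zh z x n = T (n + 1) *ᵥ psi T V Zh z x (n + 1) := by
  rw [psi_succ, Matrix.mulVec_mulVec,
    Matrix.mul_nonsing_inv _ ((Matrix.isUnit_iff_isUnit_det _).mp hu), Matrix.one_mulVec]

lemma psi_one (x : Fin L → ℂ) (hT1 : T 1 = 1) : psi T V Zh z x 1 = x := by
  have h1 : (1 : Mat L)⁻¹ = 1 := Matrix.inv_eq_left_inv (by simp)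
  rw [psi_succ, hT1, h1, Matrix.one_mulVec, psiTop_zero]

lemma sum_fin_ite {M : ℕ} (k : ℕ) (f : Fin M → ℂ) :
    ∑ q : Fin M, (if q.val = k then f q else 0) = if h : k < M then f ⟨k, h⟩ else 0 := by
  by_cases h : k < M
  · rw [dif_pos h]
    have he : ∀ q : Fin M, (if q.val = k then f q else 0) = (if q = ⟨k, h⟩ then f q else 0) :=
      fun q => if_congr (by simp [Fin.ext_iff]) rfl rfl
    simp_rw [he]
    simp
  · rw [dif_neg h]
    apply Finset.sum_eq_zero
    intro q _
    rw [if_neg]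
    omega

lemma row_eq {N : ℕ} (w : Fin N × Fin L → ℂ) (p : Fin N) (l : Fin L) :
    ((jacobi L N T V Zh Z - z • 1) *ᵥ w) (p, l) =
      ((V (p.val + 1) - (if p.val = 0 then Zh else 0) - (if p.val = N - 1 then Z else 0)
          - z • (1 : Mat L)) *ᵥ fun m => w (p, m)) l
        + (if h : p.val + 1 < N then (T (p.val + 2) *ᵥ fun m => w (⟨p.val + 1, h⟩, m)) l else 0)
        + (if h : 0 < p.val then
            ((T (p.val + 1))ᴴ *ᵥ fun m =>
              w (⟨p.val - 1, Nat.lt_of_le_of_lt (Nat.sub_le _ _) p.isLt⟩, m)) l else 0) := by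
  rw [Matrix.sub_mulVec, Pi.sub_apply]
  have hz : ((z • (1 : Matrix (Fin N × Fin L) (Fin N × Fin L) ℂ)) *ᵥ w) (p, l) = z * w (p, l) := by
    rw [Matrix.smul_mulVec, Matrix.one_mulVec]
    simp
  rw [hz]
  have hsplit : ((V (p.val + 1) - (if p.val = 0 then Zh else 0)
      - (if p.val = N - 1 then Z else 0) - z • (1 : Mat L)) *ᵥ fun m => w (p, m)) l
      = ((V (p.val + 1) - (if p.val = 0 then Zh else 0)
      - (if p.val = N - 1 then Z else 0)) *ᵥ fun m => w (p, m)) l - z * w (p, l) := by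
    rw [Matrix.sub_mulVec, Pi.sub_apply, Matrix.smul_mulVec, Matrix.one_mulVec]
    simp
  rw [hsplit]
  have hmain : (jacobi L N T V Zh Z *ᵥ w) (p, l)
      = ((V (p.val + 1) - (if p.val = 0 then Zh else 0)
          - (if p.val = N - 1 then Z else 0)) *ᵥ fun m => w (p, m)) l
        + (if h : p.val + 1 < N then (T (p.val + 2) *ᵥ fun m => w (⟨p.val + 1, h⟩, m)) l else 0)
        + (if h : 0 < p.val then
            ((T (p.val + 1))ᴴ *ᵥ fun m =>
              w (⟨p.val - 1, Nat.lt_of_le_of_lt (Nat.sub_le _ _) p.isLt⟩, m)) l else 0) := by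
    have hentry : (jacobi L N T V Zh Z *ᵥ w) (p, l)
        = ∑ q : Fin N, ∑ m : Fin L, jacobi L N T V Zh Z (p, l) (q, m) * w (q, m) := by
      rw [Matrix.mulVec, dotProduct, Fintype.sum_prod_type]
    rw [hentry]
    have hq : ∀ q : Fin N, (∑ m : Fin L, jacobi L N T V Zh Z (p, l) (q, m) * w (q, m))
        = (if q = p then ((V (p.val + 1) - (if p.val = 0 then Zh else 0)
              - (if p.val = N - 1 then Z else 0)) *ᵥ fun m => w (p, m)) l else 0)
          + (if q.val = p.val + 1 then (T (p.val + 2) *ᵥ fun m => w (q, m)) l else 0)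
          + (if p.val = q.val + 1 then ((T (q.val + 2))ᴴ *ᵥ fun m => w (q, m)) l else 0) := by
      intro q
      by_cases h1 : p = q
      · subst h1
        have h2 : ¬(p.val = p.val + 1) := by omega
        simp [jacobi, h2, Matrix.mulVec, dotProduct]
      · by_cases h2 : q.val = p.val + 1
        · have h3 : ¬(p.val = q.val + 1) := by omega
          have h1' : q ≠ p := fun h => h1 h.symm
          have h4 : ¬(p.val = p.val + 1 + 1) := by omega
          simp [jacobi, h1, h1', h2, h3, h4, Matrix.mulVec, dotProduct]
        · by_cases h3 : p.val = q.val + 1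
          · have h1' : q ≠ p := fun h => h1 h.symm
            have h4 : ¬(q.val = q.val + 1 + 1) := by omega
            simp [jacobi, h1, h1', h2, h3, h4, Matrix.mulVec, dotProduct]
          · have h1' : q ≠ p := fun h => h1 h.symm
            simp [jacobi, h1, h1', h2, h3]
    rw [Finset.sum_congr rfl (fun q _ => hq q)]
    rw [Finset.sum_add_distrib, Finset.sum_add_distrib]
    congr 1
    · congr 1
      · rw [Finset.sum_ite_eq' Finset.univ p]
        simp
      · exact sum_fin_ite (p.val + 1) _
    · by_cases hp : 0 < p.val
      · have he : ∀ q : Fin N, (if p.val = q.val + 1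
            then ((T (q.val + 2))ᴴ *ᵥ fun m => w (q, m)) l else 0)
            = (if q.val = p.val - 1 then ((T (q.val + 2))ᴴ *ᵥ fun m => w (q, m)) l else 0) :=
          fun q => if_congr (by omega) rfl rfl
        simp_rw [he]
        rw [sum_fin_ite, dif_pos (Nat.lt_of_le_of_lt (Nat.sub_le _ _) p.isLt), dif_pos hp]
        have hnum : p.val - 1 + 2 = p.val + 1 := by omega
        rw [hnum]
      · rw [dif_neg hp]
        apply Finset.sum_eq_zero
        intro q _
        rw [if_neg]
        omega
  rw [hmain]
  ring

lemma forward_vec {N : ℕ} (hT1 : T 1 = 1) (hTu : ∀ k, 1 ≤ k → k ≤ N → IsUnit (T k))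
    (x : Fin L → ℂ) (hb : psiTop T V Zh z x N = (-Z) *ᵥ psi T V Zh z x N)
    (n : ℕ) (hn : n < N) :
    (V (n + 1) - (if n = 0 then Zh else 0) - (if n = N - 1 then Z else 0) - z • (1 : Mat L))
        *ᵥ psi T V Zh z x (n + 1)
      + (if h : n + 1 < N then T (n + 2) *ᵥ psi T V Zh z x (n + 2) else 0)
      + (if h : 0 < n then (T (n + 1))ᴴ *ᵥ psi T V Zh z x (n - 1 + 1) else 0) = 0 := by
  have hTop := psiTop_succ T V Zh z x n
  by_cases h2 : n + 1 < N
  · rw [dif_pos h2, if_neg (by omega : ¬ n = N - 1)]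
    have hT2 : T (n + 2) *ᵥ psi T V Zh z x (n + 2) = psiTop T V Zh z x (n + 1) :=
      (psiTop_eq_mul T V Zh z x (n + 1) (hTu (n + 2) (by omega) (by omega))).symm
    rw [hT2, hTop]
    by_cases h0 : 0 < n
    · rw [dif_pos h0, if_neg (by omega : ¬ n = 0)]
      have hnum : n - 1 + 1 = n := by omega
      rw [hnum]
      simp only [sub_zero, Matrix.sub_mulVec, Matrix.smul_mulVec, Matrix.one_mulVec]
      abel
    · have hn0 : n = 0 := by omega
      subst hn0
      rw [dif_neg h0, if_pos rfl, add_zero, hT1, Matrix.conjTranspose_one, Matrix.one_mulVec,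
        psi_zero, psi_one T V Zh z x hT1]
      simp only [sub_zero, Matrix.sub_mulVec, Matrix.neg_mulVec, Matrix.smul_mulVec,
        Matrix.one_mulVec]
      abel
  · have hnN : n + 1 = N := by omega
    rw [dif_neg h2, add_zero, if_pos (by omega : n = N - 1)]
    have hb' : (z • (1 : Mat L) - V (n + 1)) *ᵥ psi T V Zh z x (n + 1)
        - (T (n + 1))ᴴ *ᵥ psi T V Zh z x n = (-Z) *ᵥ psi T V Zh z x (n + 1) := by
      rw [← hTop, hnN]
      exact hb
    by_cases h0 : 0 < n
    · rw [dif_pos h0, if_neg (by omega : ¬ n = 0)]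
      have hnum : n - 1 + 1 = n := by omega
      rw [hnum]
      have hkey : (V (n + 1) - 0 - Z - z • (1 : Mat L)) *ᵥ psi T V Zh z x (n + 1)
          + (T (n + 1))ᴴ *ᵥ psi T V Zh z x n
          = ((-Z) *ᵥ psi T V Zh z x (n + 1))
            - ((z • (1 : Mat L) - V (n + 1)) *ᵥ psi T V Zh z x (n + 1)
              - (T (n + 1))ᴴ *ᵥ psi T V Zh z x n) := by
        simp only [sub_zero, Matrix.sub_mulVec, Matrix.neg_mulVec, Matrix.smul_mulVec,
          Matrix.one_mulVec]
        abel
      rw [hkey, hb', sub_self]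
    · have hn0 : n = 0 := by omega
      subst hn0
      rw [dif_neg h0, add_zero, if_pos rfl]
      rw [hT1, Matrix.conjTranspose_one, Matrix.one_mulVec, psi_zero] at hb'
      have hkey : (V 1 - Zh - Z - z • (1 : Mat L)) *ᵥ psi T V Zh z x 1
          = ((-Z) *ᵥ psi T V Zh z x 1)
            - ((z • (1 : Mat L) - V 1) *ᵥ psi T V Zh z x 1 - (-Zh) *ᵥ x) := by
        rw [psi_one T V Zh z x hT1]
        simp only [Matrix.sub_mulVec, Matrix.neg_mulVec, Matrix.smul_mulVec,
          Matrix.one_mulVec]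
        abel
      rw [hkey, hb', sub_self]

lemma F_mem {N : ℕ} (hT1 : T 1 = 1) (hTu : ∀ k, 1 ≤ k → k ≤ N → IsUnit (T k))
    (x : Fin L → ℂ) (hb : psiTop T V Zh z x N = (-Z) *ᵥ psi T V Zh z x N) :
    (jacobi L N T V Zh Z - z • 1) *ᵥ (fun pr : Fin N × Fin L =>
      psi T V Zh z x (pr.1.val + 1) pr.2) = 0 := by
  funext pr
  obtain ⟨p, l⟩ := pr
  rw [row_eq]
  have hv := congrFun (forward_vec T V Zh Z z hT1 hTu x hb p.val p.isLt) l
  simp only [Pi.add_apply, Pi.zero_apply, dite_apply] at hv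
  exact hv

lemma ker_main {N : ℕ} (hN : 0 < N) (hT1 : T 1 = 1) (hTu : ∀ k, 1 ≤ k → k ≤ N → IsUnit (T k))
    (w : Fin N × Fin L → ℂ) (hker : (jacobi L N T V Zh Z - z • 1) *ᵥ w = 0) :
    (∀ p : Fin N, (fun m => w (p, m))
        = psi T V Zh z (fun l => w (⟨0, hN⟩, l)) (p.val + 1))
    ∧ psiTop T V Zh z (fun l => w (⟨0, hN⟩, l)) N
        = (-Z) *ᵥ psi T V Zh z (fun l => w (⟨0, hN⟩, l)) N := by
  set x : Fin L → ℂ := fun l => w (⟨0, hN⟩, l) with hx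
  have hrow : ∀ p : Fin N,
      (V (p.val + 1) - (if p.val = 0 then Zh else 0) - (if p.val = N - 1 then Z else 0)
          - z • (1 : Mat L)) *ᵥ (fun m => w (p, m))
        + (if h : p.val + 1 < N then T (p.val + 2) *ᵥ (fun m => w (⟨p.val + 1, h⟩, m)) else 0)
        + (if h : 0 < p.val then
            (T (p.val + 1))ᴴ *ᵥ (fun m =>
              w (⟨p.val - 1, Nat.lt_of_le_of_lt (Nat.sub_le _ _) p.isLt⟩, m)) else 0) = 0 := by
    intro p
    funext l
    have h0 := congrFun hker (p, l)
    rw [row_eq] at h0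
    simp only [Pi.add_apply, Pi.zero_apply, dite_apply]
    exact h0
  have hrec : ∀ k, ∀ hk : k < N, (fun m => w (⟨k, hk⟩, m)) = psi T V Zh z x (k + 1) := by
    intro k
    induction k using Nat.strong_induction_on with
    | _ k ih =>
      match k with
      | 0 =>
        intro hk
        rw [psi_one T V Zh z x hT1]
      | (k' + 1) =>
        intro hk
        have hk' : k' < N := by omega
        have hrow' := hrow ⟨k', hk'⟩
        simp only at hrow'
        rw [dif_pos (show k' + 1 < N from hk)] at hrow'
        rw [if_neg (show ¬ k' = N - 1 by omega)] at hrow'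
        have hwk := ih k' (by omega) hk'
        have hTop := psiTop_succ T V Zh z x k'
        have hTmul : psiTop T V Zh z x (k' + 1) = T (k' + 2) *ᵥ psi T V Zh z x (k' + 2) :=
          psiTop_eq_mul T V Zh z x (k' + 1) (hTu (k' + 2) (by omega) (by omega))
        by_cases h0 : 0 < k'
        · have hnum : k' - 1 + 1 = k' := by omega
          have hwk1 := ih (k' - 1) (by omega) (Nat.lt_of_le_of_lt (Nat.sub_le _ _) hk')
          rw [hnum] at hwk1
          rw [dif_pos h0, if_neg (show ¬ k' = 0 by omega), hwk, hwk1] at hrow'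
          have key : T (k' + 2) *ᵥ (fun m => w (⟨k' + 1, hk⟩, m))
              = T (k' + 2) *ᵥ psi T V Zh z x (k' + 2) := by
            rw [← hTmul, hTop]
            calc T (k' + 2) *ᵥ (fun m => w (⟨k' + 1, hk⟩, m))
                = ((V (k' + 1) - 0 - 0 - z • (1 : Mat L)) *ᵥ psi T V Zh z x (k' + 1)
                    + T (k' + 2) *ᵥ (fun m => w (⟨k' + 1, hk⟩, m))
                    + (T (k' + 1))ᴴ *ᵥ psi T V Zh z x k')
                  - (V (k' + 1) - 0 - 0 - z • (1 : Mat L)) *ᵥ psi T V Zh z x (k' + 1)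
                  - (T (k' + 1))ᴴ *ᵥ psi T V Zh z x k' := by abel
              _ = (z • (1 : Mat L) - V (k' + 1)) *ᵥ psi T V Zh z x (k' + 1)
                  - (T (k' + 1))ᴴ *ᵥ psi T V Zh z x k' := by
                  rw [hrow']
                  simp only [sub_zero, Matrix.sub_mulVec, Matrix.smul_mulVec,
                    Matrix.one_mulVec]
                  abel
          exact mulVec_cancel (hTu (k' + 2) (by omega) (by omega)) key
        · have hk0 : k' = 0 := by omega
          subst hk0
          rw [dif_neg h0, add_zero, if_pos rfl, hwk] at hrow'
          have key : T 2 *ᵥ (fun m => w (⟨1, hk⟩, m)) = T 2 *ᵥ psi T V Zh z x 2 := by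
            rw [show (0 : ℕ) + 2 = 2 from rfl] at hTmul
            rw [← hTmul, hTop, hT1, Matrix.conjTranspose_one, Matrix.one_mulVec, psi_zero,
              psi_one T V Zh z x hT1]
            rw [psi_one T V Zh z x hT1] at hrow'
            calc T 2 *ᵥ (fun m => w (⟨1, hk⟩, m))
                = ((V 1 - Zh - 0 - z • (1 : Mat L)) *ᵥ x
                    + T 2 *ᵥ (fun m => w (⟨1, hk⟩, m)))
                  - (V 1 - Zh - 0 - z • (1 : Mat L)) *ᵥ x := by abel
              _ = (z • (1 : Mat L) - V 1) *ᵥ x - (-Zh) *ᵥ x := by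
                  rw [hrow']
                  simp only [sub_zero, Matrix.sub_mulVec, Matrix.neg_mulVec,
                    Matrix.smul_mulVec, Matrix.one_mulVec]
                  abel
          exact mulVec_cancel (hTu 2 (by omega) (by omega)) key
  constructor
  · intro p
    have := hrec p.val p.isLt
    simpa using this
  · have hNm : N - 1 + 1 = N := by omega
    have hrow' := hrow ⟨N - 1, by omega⟩
    simp only at hrow'
    rw [dif_neg (show ¬ N - 1 + 1 < N by omega), add_zero] at hrow'
    simp only [if_true] at hrow'
    have hwN := hrec (N - 1) (by omega)
    rw [hwN] at hrow'
    have hTop := psiTop_succ T V Zh z x (N - 1)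
    by_cases h0 : 0 < N - 1
    · have hnum : N - 1 - 1 + 1 = N - 1 := by omega
      have hwN1 := (hrec (N - 1 - 1) (by omega)).trans
        (congrArg (psi T V Zh z x) hnum)
      rw [dif_pos h0, if_neg (show ¬ N - 1 = 0 by omega), hwN1] at hrow'
      have hdiff : psiTop T V Zh z x (N - 1 + 1) - (-Z) *ᵥ psi T V Zh z x (N - 1 + 1)
          = -((V (N - 1 + 1) - 0 - Z - z • (1 : Mat L)) *ᵥ psi T V Zh z x (N - 1 + 1)
              + (T (N - 1 + 1))ᴴ *ᵥ psi T V Zh z x (N - 1)) := by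
        rw [hTop]
        simp only [sub_zero, Matrix.sub_mulVec, Matrix.neg_mulVec, Matrix.smul_mulVec,
          Matrix.one_mulVec]
        abel
      rw [hrow', neg_zero] at hdiff
      have := sub_eq_zero.mp hdiff
      rwa [hNm] at this
    · have hN1 : N = 1 := by omega
      subst hN1
      rw [dif_neg h0, add_zero, if_pos (show (1:ℕ) - 1 = 0 from rfl)] at hrow'
      norm_num at hrow'
      have hTop1 := psiTop_succ T V Zh z x 0
      rw [hT1, Matrix.conjTranspose_one, Matrix.one_mulVec, psi_zero] at hTop1
      have hdiff : psiTop T V Zh z x 1 - (-Z) *ᵥ psi T V Zh z x 1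
          = -((V 1 - Zh - Z - z • (1 : Mat L)) *ᵥ psi T V Zh z x 1) := by
        rw [hTop1, psi_one T V Zh z x hT1]
        simp only [Matrix.sub_mulVec, Matrix.neg_mulVec, Matrix.smul_mulVec,
          Matrix.one_mulVec]
        abel
      rw [hrow', neg_zero] at hdiff
      exact sub_eq_zero.mp hdiff

end Stmt19Aux

open Stmt19Aux

theorem stmt19 (L N : ℕ) (hL : 1 ≤ L) (hN : 1 ≤ N)
    (T V : ℕ → Mat L) (hT1 : T 1 = 1)
    (hTinv : ∀ n, 2 ≤ n → n ≤ N → IsUnit (T n))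
    (hV : ∀ n, 1 ≤ n → n ≤ N → (V n).IsHermitian)
    (Zh Z : Mat L) (z : ℂ) :
    Module.finrank ℂ
        (LinearMap.ker (jacobi L N T V Zh Z - z • 1).mulVecLin) =
      Module.finrank ℂ
        ↥(LinearMap.range (transferProd L N T V z * Matrix.fromRows 1 (-Zh)).mulVecLin ⊓
          LinearMap.range (Matrix.fromRows (-Z) (1 : Mat L)).mulVecLin) := by
  have hTu : ∀ k, 1 ≤ k → k ≤ N → IsUnit (T k) := by
    intro k h1 h2
    rcases Nat.eq_or_lt_of_le h1 with h | h
    · rw [← h, hT1]; exact isUnit_one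
    · exact hTinv k (by omega) h2
  set A := (transferProd L N T V z * Matrix.fromRows 1 (-Zh)).mulVecLin with hA
  set W := LinearMap.range (Matrix.fromRows (-Z) (1 : Mat L)).mulVecLin with hW
  have hxS : ∀ x : Fin L → ℂ, A x ∈ W ↔
      psiTop T V Zh z x N = (-Z) *ᵥ psi T V Zh z x N := by
    intro x
    constructor
    · rintro ⟨y, hy⟩
      have hy' : Matrix.fromRows (-Z) (1 : Mat L) *ᵥ y = Bmat T V Zh z N *ᵥ x := hy
      rw [Matrix.fromRows_mulVec] at hy'
      have hbot : psi T V Zh z x N = y := by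
        funext i
        have h1 := congrFun hy' (Sum.inr i)
        simpa [psi, Matrix.one_mulVec] using h1.symm
      have htop : psiTop T V Zh z x N = (-Z) *ᵥ y := by
        funext i
        exact (congrFun hy' (Sum.inl i)).symm
      rw [htop, hbot]
    · intro hb
      refine ⟨psi T V Zh z x N, ?_⟩
      show Matrix.fromRows (-Z) (1 : Mat L) *ᵥ psi T V Zh z x N = Bmat T V Zh z N *ᵥ x
      rw [Matrix.fromRows_mulVec]
      funext i
      cases i with
      | inl i => exact (congrFun hb i).symm
      | inr i =>
          show ((1 : Mat L) *ᵥ psi T V Zh z x N) i = _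
          rw [Matrix.one_mulVec]
          rfl
  let F : (Fin L → ℂ) →ₗ[ℂ] (Fin N × Fin L → ℂ) :=
    { toFun := fun x => fun pr => psi T V Zh z x (pr.1.val + 1) pr.2
      map_add' := by
        intro a b; funext pr
        simp [psi, Matrix.mulVec_add]
      map_smul' := by
        intro c a; funext pr
        simp [psi, Matrix.mulVec_smul] }
  let G : (Fin N × Fin L → ℂ) →ₗ[ℂ] (Fin L → ℂ) :=
    { toFun := fun w => fun l => w (⟨0, hN⟩, l)
      map_add' := fun _ _ => rfl
      map_smul' := fun _ _ => rfl }
  set K := LinearMap.ker (jacobi L N T V Zh Z - z • 1).mulVecLin with hK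
  set S := Submodule.comap A W with hS
  have hFS : ∀ x ∈ S, F x ∈ K := by
    intro x hx
    have hb := (hxS x).mp (Submodule.mem_comap.mp hx)
    exact LinearMap.mem_ker.mpr (F_mem T V Zh Z z hT1 hTu x hb)
  have hGK : ∀ w ∈ K, G w ∈ S := by
    intro w hw
    have hker : (jacobi L N T V Zh Z - z • 1) *ᵥ w = 0 := LinearMap.mem_ker.mp hw
    have hmain := ker_main T V Zh Z z hN hT1 hTu w hker
    exact Submodule.mem_comap.mpr ((hxS (G w)).mpr hmain.2)
  let e : S ≃ₗ[ℂ] K := LinearEquiv.ofLinear (F.restrict hFS) (G.restrict hGK)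
    (by
      apply LinearMap.ext
      rintro ⟨w, hw⟩
      apply Subtype.ext
      have hker : (jacobi L N T V Zh Z - z • 1) *ᵥ w = 0 := LinearMap.mem_ker.mp hw
      have hmain := ker_main T V Zh Z z hN hT1 hTu w hker
      show F (G w) = w
      funext pr
      obtain ⟨p, l⟩ := pr
      exact (congrFun (hmain.1 p) l).symm)
    (by
      apply LinearMap.ext
      rintro ⟨x, hx⟩
      apply Subtype.ext
      show G (F x) = x
      funext l
      exact congrFun (psi_one T V Zh z x hT1) l)
  have e1 : Module.finrank ℂ K = Module.finrank ℂ S := (LinearEquiv.finrank_eq e).symm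
  have hP : IsUnit (transferProd L N T V z) := transferProd_isUnit T V z N hTu
  have hinj : Function.Injective A := by
    intro a b hab
    have hab' : transferProd L N T V z *ᵥ (Matrix.fromRows 1 (-Zh) *ᵥ a)
        = transferProd L N T V z *ᵥ (Matrix.fromRows 1 (-Zh) *ᵥ b) := by
      rw [Matrix.mulVec_mulVec, Matrix.mulVec_mulVec]
      exact hab
    have h2 := mulVec_cancel hP hab'
    funext i
    have h3 := congrFun h2 (Sum.inl i)
    rw [Matrix.fromRows_mulVec, Matrix.fromRows_mulVec] at h2
    have h4 := congrFun h2 (Sum.inl i)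
    simpa [Matrix.one_mulVec] using h4
  have e2 : Module.finrank ℂ S = Module.finrank ℂ ↥(LinearMap.range A ⊓ W) := by
    have hmap : Submodule.map A S = LinearMap.range A ⊓ W := Submodule.map_comap_eq A W
    rw [← hmap]
    exact LinearEquiv.finrank_eq (Submodule.equivMapOfInjective A hinj S)
  exact e1.trans e2
end
end
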